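/- Let E be a Dedekind complete Riesz space and (f_n) a sequence in E that order converges to 0. Then the Cesàro averages of the absolute values, (1/n)·∑_{k=0}^{n-1} |f_k|, order converge to 0 as n → ∞. -/

import Mathlib

open Finset

section Defs

variable {E : Type*} [ConditionallyCompleteLattice E] [AddCommGroup E] [Module ℝ E]
  [CovariantClass E E (· + ·) (· ≤ ·)]

/-- Order convergence of a sequence: there is a sequence `u ↓ 0` dominating the tails. -/
def OrderConvergesTo (f : ℕ → E) (x : E) : Prop :=
  ∃ u : ℕ → E, Antitone u ∧ IsGLB (Set.range u) (0 : E) ∧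
    ∀ m : ℕ, ∃ N : ℕ, ∀ n ≥ N, |f n - x| ≤ u m

/-- `p` is a component of `e`. -/
def IsComponent (e p : E) : Prop := 0 ≤ p ∧ p ≤ e ∧ p ⊓ (e - p) = 0

/-- A sequence of components is of density zero if its Cesàro means order converge to `0`. -/
def DensityZero (p : ℕ → E) : Prop :=
  OrderConvergesTo (fun n => (n : ℝ)⁻¹ • ∑ k ∈ Finset.range n, p k) (0 : E)

/-- The band projection (onto the band generated by `p`) applied to a positive element `f`. -/
noncomputable def bandProj (p f : E) : E :=
  sSup (Set.range fun n : ℕ => f ⊓ (n : ℝ) • p)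

end Defs

section Systems

variable (E : Type*) [ConditionallyCompleteLattice E] [AddCommGroup E] [Module ℝ E]
  [CovariantClass E E (· + ·) (· ≤ ·)]

/-- The data of a conditional expectation preserving system, without the
intertwining identity `T S = T`: a Dedekind complete Riesz space with weak order unit `e`,
the `f`-algebra multiplication of `E_e` (with unit `e`), a strictly-positive-free
conditional expectation operator `T` with `T e = e`, and a Riesz homomorphism `S`
with `S e = e`. -/
structure PreCEPS where
  e : E
  e_pos : 0 < e
  weakUnit : ∀ x : E, e ⊓ |x| = 0 → x = 0
  /-- the `f`-algebra multiplication (of the ideal generated by `e`) -/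
  mul : E →ₗ[ℝ] E →ₗ[ℝ] E
  mul_comm' : ∀ x y, mul x y = mul y x
  mul_pos' : ∀ x y, 0 ≤ x → 0 ≤ y → 0 ≤ mul x y
  one_mul' : ∀ x, mul e x = x
  finf' : ∀ x y z, x ⊓ y = 0 → 0 ≤ z → (mul x z) ⊓ y = 0
  /-- the conditional expectation operator -/
  T : E →ₗ[ℝ] E
  T_pos : ∀ x, 0 ≤ x → 0 ≤ T x
  T_proj : ∀ x, T (T x) = T x
  T_e : T e = e
  T_oc : ∀ (s : Set E) (x : E), s.Nonempty → DirectedOn (· ≤ ·) s → IsLUB s x →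
    IsLUB (T '' s) (T x)
  T_range_closed : ∀ (s : Set E) (x : E), (∀ y ∈ s, T y = y) → IsLUB s x → T x = x
  /-- the Riesz homomorphism -/
  S : E →ₗ[ℝ] E
  S_sup : ∀ x y, S (x ⊔ y) = S x ⊔ S y
  S_e : S e = e

/-- A conditional expectation preserving system. -/
structure CEPS extends PreCEPS E where
  TS : ∀ x, T (S x) = T x

variable {E}

/-- Strict positivity of the conditional expectation operator of a system. -/
def CEPS.StrictPos (A : CEPS E) : Prop := ∀ x : E, 0 ≤ x → A.T x = 0 → x = 0

/-- Ergodicity, characterised by Cesàro convergence of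
`T((S^k p)·q)` to `Tp·Tq` for all components `p, q` of `e`. -/
def CEPS.Ergodic (A : CEPS E) : Prop :=
  ∀ p q : E, IsComponent A.e p → IsComponent A.e q →
    OrderConvergesTo
      (fun n => (n : ℝ)⁻¹ • ∑ k ∈ Finset.range n, A.T (A.mul ((A.S ^ k) p) q))
      (A.mul (A.T p) (A.T q))

/-- Conditional weak mixing. -/
def CEPS.WeakMixing (A : CEPS E) : Prop :=
  ∀ p q : E, IsComponent A.e p → IsComponent A.e q →
    OrderConvergesTo
      (fun n => (n : ℝ)⁻¹ • ∑ k ∈ Finset.range n,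
        |A.T (A.mul ((A.S ^ k) p) q) - A.mul (A.T p) (A.T q)|) (0 : E)

end Systems

section Tensor

variable {E F G : Type*}
  [ConditionallyCompleteLattice E] [AddCommGroup E] [Module ℝ E]
  [CovariantClass E E (· + ·) (· ≤ ·)]
  [ConditionallyCompleteLattice F] [AddCommGroup F] [Module ℝ F]
  [CovariantClass F F (· + ·) (· ≤ ·)]
  [ConditionallyCompleteLattice G] [AddCommGroup G] [Module ℝ G]
  [CovariantClass G G (· + ·) (· ≤ ·)]

/-- A realisation of the Dedekind completion of the Fremlin tensor product of the
underlying spaces of two conditional expectation preserving systems, carrying the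
pre-system structure (Grobler's tensor product conditional expectation and the tensor
product Riesz homomorphism), but without the intertwining identity for the product. -/
structure TensorPreCEPS (A : CEPS E) (B : CEPS F) (G : Type*)
    [ConditionallyCompleteLattice G] [AddCommGroup G] [Module ℝ G]
    [CovariantClass G G (· + ·) (· ≤ ·)] where
  sys : PreCEPS G
  tmul : E →ₗ[ℝ] F →ₗ[ℝ] G
  tmul_pos : ∀ x y, 0 ≤ x → 0 ≤ y → 0 ≤ tmul x y
  e_def : sys.e = tmul A.e B.e
  T_tmul : ∀ x y, sys.T (tmul x y) = tmul (A.T x) (B.T y)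
  S_tmul : ∀ x y, sys.S (tmul x y) = tmul (A.S x) (B.S y)
  mul_tmul : ∀ x y x' y',
    sys.mul (tmul x y) (tmul x' y') = tmul (A.mul x x') (B.mul y y')
  comp_dense : ∀ u : G, IsComponent sys.e u →
    IsLUB {w : G | ∃ p q, IsComponent A.e p ∧ IsComponent B.e q ∧
      tmul p q ≤ u ∧ w = tmul p q} u
  tmul_oc_left : ∀ (x : ℕ → E) (a : E) (y : F), 0 ≤ y →
    OrderConvergesTo x a → OrderConvergesTo (fun n => tmul (x n) y) (tmul a y)
  tmul_oc_right : ∀ (x : E) (y : ℕ → F) (b : F), 0 ≤ x →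
    OrderConvergesTo y b → OrderConvergesTo (fun n => tmul x (y n)) (tmul x b)

/-- As `TensorPreCEPS`, but where the tensor product system is a full conditional
expectation preserving system. -/
structure TensorCEPS (A : CEPS E) (B : CEPS F) (G : Type*)
    [ConditionallyCompleteLattice G] [AddCommGroup G] [Module ℝ G]
    [CovariantClass G G (· + ·) (· ≤ ·)] where
  sys : CEPS G
  tmul : E →ₗ[ℝ] F →ₗ[ℝ] G
  tmul_pos : ∀ x y, 0 ≤ x → 0 ≤ y → 0 ≤ tmul x y
  e_def : sys.e = tmul A.e B.e
  T_tmul : ∀ x y, sys.T (tmul x y) = tmul (A.T x) (B.T y)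
  S_tmul : ∀ x y, sys.S (tmul x y) = tmul (A.S x) (B.S y)
  mul_tmul : ∀ x y x' y',
    sys.mul (tmul x y) (tmul x' y') = tmul (A.mul x x') (B.mul y y')
  comp_dense : ∀ u : G, IsComponent sys.e u →
    IsLUB {w : G | ∃ p q, IsComponent A.e p ∧ IsComponent B.e q ∧
      tmul p q ≤ u ∧ w = tmul p q} u
  tmul_oc_left : ∀ (x : ℕ → E) (a : E) (y : F), 0 ≤ y →
    OrderConvergesTo x a → OrderConvergesTo (fun n => tmul (x n) y) (tmul a y)
  tmul_oc_right : ∀ (x : E) (y : ℕ → F) (b : F), 0 ≤ x →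
    OrderConvergesTo y b → OrderConvergesTo (fun n => tmul x (y n)) (tmul x b)

end Tensor


section Aux

variable {E : Type*} [ConditionallyCompleteLattice E] [AddCommGroup E] [Module ℝ E]
  [CovariantClass E E (· + ·) (· ≤ ·)]

private lemma aux_inf_add_le {a b c : E} (ha : 0 ≤ a) (hb : 0 ≤ b) (hc : 0 ≤ c) :
    a ⊓ (b + c) ≤ a ⊓ b + a ⊓ c := by
  have h1 : a ⊓ (b + c) ≤ a ⊓ b + c := by
    have h2 : a ⊓ (b + c) ≤ (a + c) ⊓ (b + c) :=
      le_inf (inf_le_left.trans (le_add_of_nonneg_right hc)) inf_le_right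
    rwa [← inf_add] at h2
  calc a ⊓ (b + c) ≤ (a ⊓ b + a) ⊓ (a ⊓ b + c) :=
        le_inf (inf_le_left.trans (le_add_of_nonneg_left (le_inf ha hb))) h1
    _ = a ⊓ b + a ⊓ c := (add_inf a c (a ⊓ b)).symm

private lemma aux_inf_nsmul_eq_zero {a b : E} (ha : 0 ≤ a) (hb : 0 ≤ b)
    (hab : a ⊓ b = 0) : ∀ n : ℕ, a ⊓ n • b = 0
  | 0 => by
      rw [zero_smul]
      exact inf_eq_right.2 ha
  | (n + 1) => by
      rw [succ_nsmul]
      refine le_antisymm ?_ (le_inf ha (add_nonneg (nsmul_nonneg hb n) hb))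
      have hle := aux_inf_add_le ha (nsmul_nonneg hb n) hb
      rwa [aux_inf_nsmul_eq_zero ha hb hab n, hab, add_zero] at hle

private lemma aux_nonneg_of_nsmul {a : E} {n : ℕ} (hn : n ≠ 0) (h : 0 ≤ n • a) : 0 ≤ a := by
  have hd : a⁻ ⊓ n • a⁺ = 0 :=
    aux_inf_nsmul_eq_zero (negPart_nonneg a) (posPart_nonneg a)
      (by rw [inf_comm]; exact posPart_inf_negPart_eq_zero a) n
  have h1 : n • a⁻ ≤ n • a⁺ := by
    have h0 : 0 ≤ n • a⁺ - n • a⁻ := by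
      rw [← nsmul_sub, posPart_sub_negPart]; exact h
    exact sub_nonneg.1 h0
  have h2 : a⁻ ≤ n • a⁻ := by
    calc a⁻ = 1 • a⁻ := (one_nsmul _).symm
      _ ≤ n • a⁻ := nsmul_le_nsmul_left (negPart_nonneg a) (Nat.one_le_iff_ne_zero.2 hn)
  have h3 : a⁻ = 0 := by
    have h4 : a⁻ ⊓ n • a⁺ = a⁻ := inf_eq_left.2 (h2.trans h1)
    rw [hd] at h4
    exact h4.symm
  have h5 := posPart_sub_negPart a
  rw [h3, sub_zero] at h5
  rw [← h5]
  exact posPart_nonneg a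

private lemma aux_div_smul_nonneg {x : E} (hx : 0 ≤ x) (a b : ℕ) :
    0 ≤ ((a : ℝ) / (b : ℝ)) • x := by
  rcases Nat.eq_zero_or_pos b with hb | hb
  · simp [hb]
  · apply aux_nonneg_of_nsmul (n := b) hb.ne'
    have hb0 : (b : ℝ) ≠ 0 := Nat.cast_ne_zero.2 hb.ne'
    have hkey : b • (((a : ℝ) / (b : ℝ)) • x) = a • x := by
      rw [← Nat.cast_smul_eq_nsmul ℝ b, ← Nat.cast_smul_eq_nsmul ℝ a, smul_smul]
      congr 1
      field_simp
    rw [hkey]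
    exact nsmul_nonneg hx a

private lemma aux_smul_le_smul {x : E} (hx : 0 ≤ x) {c d : ℝ} (a b : ℕ)
    (h : d - c = (a : ℝ) / (b : ℝ)) : c • x ≤ d • x := by
  have h0 := aux_div_smul_nonneg hx a b
  rw [← h, sub_smul] at h0
  exact sub_nonneg.1 h0

private lemma aux_inv_smul_nonneg {x : E} (hx : 0 ≤ x) (n : ℕ) : 0 ≤ ((n : ℝ))⁻¹ • x := by
  have := aux_div_smul_nonneg hx 1 n
  rwa [Nat.cast_one, one_div] at this

private lemma aux_sum_nonneg {ι : Type*} {s : Finset ι} {F : ι → E}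
    (h : ∀ k ∈ s, 0 ≤ F k) : 0 ≤ ∑ k ∈ s, F k := by
  classical
  induction s using Finset.cons_induction with
  | empty => simp
  | cons a s ha ih =>
      rw [Finset.sum_cons]
      exact add_nonneg (h a (Finset.mem_cons_self a s))
        (ih fun k hk => h k (Finset.mem_cons_of_mem hk))

private lemma aux_sum_le_card_nsmul {ι : Type*} {s : Finset ι} {F : ι → E} {b : E}
    (h : ∀ k ∈ s, F k ≤ b) : ∑ k ∈ s, F k ≤ s.card • b := by
  classical
  induction s using Finset.cons_induction with
  | empty => simp
  | cons a s ha ih =>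
      rw [Finset.sum_cons, Finset.card_cons, succ_nsmul]
      calc F a + ∑ k ∈ s, F k ≤ b + s.card • b :=
            add_le_add (h a (Finset.mem_cons_self a s))
              (ih fun k hk => h k (Finset.mem_cons_of_mem hk))
        _ = s.card • b + b := add_comm _ _

private lemma aux_le_zero {g h : E} (hle : ∀ j : ℕ, h ≤ ((j : ℝ) + 1)⁻¹ • g) : h ≤ 0 := by
  have hjh : ∀ j : ℕ, (j + 1) • h ≤ g := by
    intro j
    have hj0 : (j : ℝ) + 1 ≠ 0 := by positivity
    have h1 : (j + 1) • h ≤ (j + 1) • (((j : ℝ) + 1)⁻¹ • g) := nsmul_le_nsmul_right (hle j) (j + 1)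
    rwa [← Nat.cast_smul_eq_nsmul ℝ (j + 1) (((j : ℝ) + 1)⁻¹ • g), smul_smul,
      show ((j + 1 : ℕ) : ℝ) * ((j : ℝ) + 1)⁻¹ = 1 by push_cast; field_simp, one_smul] at h1
  have hne : (Set.range fun j : ℕ => j • h).Nonempty := ⟨0 • h, ⟨0, rfl⟩⟩
  have hbdd : BddAbove (Set.range fun j : ℕ => j • h) := by
    refine ⟨g - h, ?_⟩
    rintro _ ⟨j, rfl⟩
    have hj := hjh j
    rw [succ_nsmul] at hj
    exact le_sub_iff_add_le.2 hj
  have hsle : sSup (Set.range fun j : ℕ => j • h) ≤ sSup (Set.range fun j : ℕ => j • h) - h := by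
    refine csSup_le hne ?_
    rintro _ ⟨j, rfl⟩
    have hj : (j + 1) • h ≤ sSup (Set.range fun j : ℕ => j • h) := le_csSup hbdd ⟨j + 1, rfl⟩
    rw [succ_nsmul] at hj
    exact le_sub_iff_add_le.2 hj
  have hfin := le_sub_iff_add_le.1 hsle
  exact (add_le_iff_nonpos_right _).1 hfin

end Aux

/-- if `(f_n)` order converges to `0` in a Dedekind complete Riesz space,
then the Cesàro averages of `|f_n|` order converge to `0`. -/
theorem cesaro_abs_of_orderConvergesTo_zero
    {E : Type*} [ConditionallyCompleteLattice E] [AddCommGroup E] [Module ℝ E]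
    [CovariantClass E E (· + ·) (· ≤ ·)]
    (f : ℕ → E) (hf : OrderConvergesTo f (0 : E)) :
    OrderConvergesTo (fun n => (n : ℝ)⁻¹ • ∑ k ∈ Finset.range n, |f k|) (0 : E) := by
  obtain ⟨u, hu_anti, hu_glb, hu⟩ := hf
  simp only [sub_zero] at hu
  have hu0 : ∀ m, 0 ≤ u m := fun m => hu_glb.1 ⟨m, rfl⟩
  choose N hN using hu
  set C := ∑ k ∈ Finset.range (N 0), |f k| with hCdef
  have hC : 0 ≤ C := by
    rw [hCdef]
    exact aux_sum_nonneg fun k _ => abs_nonneg (f k)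
  set g := C + u 0 with hgdef
  have hg : 0 ≤ g := add_nonneg hC (hu0 0)
  have hqg : ∀ m : ℕ, 0 ≤ ((m : ℝ) + 1)⁻¹ • g := by
    intro m
    have := aux_inv_smul_nonneg hg (m + 1)
    rwa [Nat.cast_add, Nat.cast_one] at this
  refine ⟨fun m => u m + ((m : ℝ) + 1)⁻¹ • g, ?_, ?_, ?_⟩
  · -- Antitone
    intro m m' hmm'
    refine add_le_add (hu_anti hmm') ?_
    refine aux_smul_le_smul hg (m' - m) ((m + 1) * (m' + 1)) ?_
    have h1 : (m : ℝ) + 1 ≠ 0 := by positivity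
    have h2 : (m' : ℝ) + 1 ≠ 0 := by positivity
    push_cast [Nat.cast_sub hmm']
    rw [inv_sub_inv h1 h2]
    congr 1 <;> ring
  · -- IsGLB
    constructor
    · rintro _ ⟨m, rfl⟩
      exact add_nonneg (hu0 m) (hqg m)
    · intro h hh
      have key : ∀ j : ℕ, h ≤ ((j : ℝ) + 1)⁻¹ • g := by
        intro j
        have h2 : ∀ m : ℕ, h - ((j : ℝ) + 1)⁻¹ • g ≤ u m := by
          intro m
          have h3 : h ≤ u (max m j) + (((max m j : ℕ) : ℝ) + 1)⁻¹ • g := hh ⟨max m j, rfl⟩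
          have h4 : u (max m j) ≤ u m := hu_anti (le_max_left m j)
          have h5 : (((max m j : ℕ) : ℝ) + 1)⁻¹ • g ≤ ((j : ℝ) + 1)⁻¹ • g := by
            refine aux_smul_le_smul hg (max m j - j) ((j + 1) * (max m j + 1)) ?_
            have hj1 : (j : ℝ) + 1 ≠ 0 := by positivity
            have hj2 : ((max m j : ℕ) : ℝ) + 1 ≠ 0 := by positivity
            push_cast [Nat.cast_sub (le_max_right m j)]
            have hj3 : (m : ℝ) ⊔ (j : ℝ) + 1 ≠ 0 := by
              have h0 : (0 : ℝ) ≤ (m : ℝ) ⊔ (j : ℝ) := le_sup_of_le_left (Nat.cast_nonneg m)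
              intro hc
              linarith
            rw [inv_sub_inv hj1 hj3]
            congr 1 <;> ring
          exact sub_le_iff_le_add.2 (h3.trans (add_le_add h4 h5))
        have h6 : h - ((j : ℝ) + 1)⁻¹ • g ≤ 0 := by
          refine hu_glb.2 ?_
          rintro _ ⟨m, rfl⟩
          exact h2 m
        exact sub_nonpos.1 h6
      exact aux_le_zero key
  · -- tails
    intro m
    refine ⟨(m + 1) * (max (N 0) (N m) + 1), ?_⟩
    intro n hn
    set M := max (N 0) (N m) with hM
    have hnpos : 0 < n := lt_of_lt_of_le (by positivity) hn
    have hn0 : (n : ℝ) ≠ 0 := Nat.cast_ne_zero.2 hnpos.ne'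
    have hMn : M ≤ n := by
      calc M ≤ M + 1 := Nat.le_succ M
        _ ≤ (m + 1) * (M + 1) := Nat.le_mul_of_pos_left _ (Nat.succ_pos m)
        _ ≤ n := hn
    have hm1n : m + 1 ≤ n := by
      calc m + 1 ≤ (m + 1) * (M + 1) := Nat.le_mul_of_pos_right _ (Nat.succ_pos M)
        _ ≤ n := hn
    have hmMn : (m + 1) * M ≤ n := by
      calc (m + 1) * M ≤ (m + 1) * (M + 1) := Nat.mul_le_mul_left _ (Nat.le_succ M)
        _ ≤ n := hn
    have hsum : ∑ k ∈ Finset.range n, |f k| ≤ C + M • u 0 + n • u m := by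
      have hsplit : ∑ k ∈ Finset.range n, |f k| =
          C + ∑ k ∈ Finset.Ico (N 0) M, |f k| + ∑ k ∈ Finset.Ico M n, |f k| := by
        rw [hCdef, Finset.range_eq_Ico, ← Finset.sum_Ico_consecutive _ (Nat.zero_le M) hMn,
          ← Finset.sum_Ico_consecutive _ (Nat.zero_le (N 0)) (le_max_left (N 0) (N m)),
          ← Finset.range_eq_Ico]
      rw [hsplit]
      have hb1 : ∑ k ∈ Finset.Ico (N 0) M, |f k| ≤ M • u 0 := by
        calc ∑ k ∈ Finset.Ico (N 0) M, |f k| ≤ (Finset.Ico (N 0) M).card • u 0 :=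
              aux_sum_le_card_nsmul fun k hk => hN 0 k (Finset.mem_Ico.1 hk).1
          _ = (M - N 0) • u 0 := by rw [Nat.card_Ico]
          _ ≤ M • u 0 := nsmul_le_nsmul_left (hu0 0) (Nat.sub_le M (N 0))
      have hb2 : ∑ k ∈ Finset.Ico M n, |f k| ≤ n • u m := by
        calc ∑ k ∈ Finset.Ico M n, |f k| ≤ (Finset.Ico M n).card • u m :=
              aux_sum_le_card_nsmul fun k hk =>
                hN m k ((le_max_right (N 0) (N m)).trans (Finset.mem_Ico.1 hk).1)
          _ = (n - M) • u m := by rw [Nat.card_Ico]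
          _ ≤ n • u m := nsmul_le_nsmul_left (hu0 m) (Nat.sub_le n M)
      exact add_le_add (add_le_add le_rfl hb1) hb2
    have havg : 0 ≤ (n : ℝ)⁻¹ • ∑ k ∈ Finset.range n, |f k| :=
      aux_inv_smul_nonneg (aux_sum_nonneg fun k _ => abs_nonneg (f k)) n
    rw [sub_zero, abs_of_nonneg havg]
    have hmono : (n : ℝ)⁻¹ • ∑ k ∈ Finset.range n, |f k| ≤
        (n : ℝ)⁻¹ • (C + M • u 0 + n • u m) := by
      have h0 := aux_inv_smul_nonneg (sub_nonneg.2 hsum) n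
      rw [smul_sub] at h0
      exact sub_nonneg.1 h0
    have heq : (n : ℝ)⁻¹ • (C + M • u 0 + n • u m) =
        (n : ℝ)⁻¹ • C + ((M : ℝ) / (n : ℝ)) • u 0 + u m := by
      rw [smul_add, smul_add, ← Nat.cast_smul_eq_nsmul ℝ M, ← Nat.cast_smul_eq_nsmul ℝ n,
        smul_smul, smul_smul, inv_mul_cancel₀ hn0, one_smul, inv_mul_eq_div]
    have hA : (n : ℝ)⁻¹ • C ≤ ((m : ℝ) + 1)⁻¹ • C := by
      refine aux_smul_le_smul hC (n - (m + 1)) (n * (m + 1)) ?_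
      have h1 : (m : ℝ) + 1 ≠ 0 := by positivity
      push_cast [Nat.cast_sub hm1n]
      rw [inv_sub_inv h1 hn0]
      congr 1 <;> ring
    have hB : ((M : ℝ) / (n : ℝ)) • u 0 ≤ ((m : ℝ) + 1)⁻¹ • u 0 := by
      refine aux_smul_le_smul (hu0 0) (n - (m + 1) * M) ((m + 1) * n) ?_
      have h1 : (m : ℝ) + 1 ≠ 0 := by positivity
      push_cast [Nat.cast_sub hmMn]
      rw [inv_eq_one_div, div_sub_div _ _ h1 hn0]
      congr 1 <;> ring
    calc (n : ℝ)⁻¹ • ∑ k ∈ Finset.range n, |f k|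
        ≤ (n : ℝ)⁻¹ • C + ((M : ℝ) / (n : ℝ)) • u 0 + u m := by rw [← heq]; exact hmono
      _ ≤ ((m : ℝ) + 1)⁻¹ • C + ((m : ℝ) + 1)⁻¹ • u 0 + u m :=
          add_le_add (add_le_add hA hB) le_rfl
      _ = u m + ((m : ℝ) + 1)⁻¹ • g := by rw [hgdef, smul_add]; abel
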